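/- arXiv:0903.0228 — 2 statements merged into one kernel-verified Lean document; each statement's English description precedes it below -/
import Mathlib

section
/- Let E be a real inner product space, let e be a nonzero vector of E, and let v₁, …, v_l be finitely many nonzero vectors of E such that ⟨vᵢ, e⟩ ≥ 0 for every i. Set v = v₁ + ⋯ + v_l and assume v ≠ 0. Then the angle between v and e satisfies angle(v, e) ≤ max{angle(v₁, e), …, angle(v_l, e)}. -/
open scoped RealInnerProductSpace

open InnerProductGeometry

theorem angle_sum_le_max_angle
    {E : Type*} [NormedAddCommGroup E] [InnerProductSpace ℝ E]
    (e : E) (he : e ≠ 0) {l : ℕ} (hl : 0 < l) (v : Fin l → E)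
    (hv : ∀ i, v i ≠ 0) (hinner : ∀ i, 0 ≤ ⟪v i, e⟫)
    (hsum : (∑ i, v i) ≠ 0) :
    angle (∑ i, v i) e ≤
      Finset.univ.sup' ⟨⟨0, hl⟩, Finset.mem_univ _⟩
        (fun i => angle (v i) e) := by
  set θ := Finset.univ.sup' ⟨⟨0, hl⟩, Finset.mem_univ _⟩ (fun i => angle (v i) e) with hθ
  obtain ⟨j, -, hj⟩ := Finset.exists_mem_eq_sup' ⟨⟨0, hl⟩, Finset.mem_univ _⟩
    (fun i => angle (v i) e)
  rw [← hθ] at hj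
  have hθ0 : 0 ≤ θ := by rw [hj]; exact angle_nonneg _ _
  have hθπ : θ ≤ Real.pi := by rw [hj]; exact angle_le_pi _ _
  have hcosθ0 : 0 ≤ Real.cos θ := by
    rw [hj, cos_angle]
    have := hinner j
    positivity
  -- each inner product is at least ‖v i‖ * ‖e‖ * cos θ
  have key : ∀ i, ‖v i‖ * ‖e‖ * Real.cos θ ≤ ⟪v i, e⟫ := by
    intro i
    have hle : angle (v i) e ≤ θ := hθ ▸ Finset.le_sup' (fun i => angle (v i) e) (Finset.mem_univ i)
    have hcos : Real.cos θ ≤ Real.cos (angle (v i) e) :=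
      Real.cos_le_cos_of_nonneg_of_le_pi (angle_nonneg _ _) hθπ hle
    calc ‖v i‖ * ‖e‖ * Real.cos θ ≤ ‖v i‖ * ‖e‖ * Real.cos (angle (v i) e) := by
          have : (0:ℝ) ≤ ‖v i‖ * ‖e‖ := by positivity
          nlinarith
      _ = ⟪v i, e⟫ := by rw [mul_comm]; exact cos_angle_mul_norm_mul_norm _ _
  have hsumkey : ‖∑ i, v i‖ * ‖e‖ * Real.cos θ ≤ ⟪∑ i, v i, e⟫ := by
    have h1 : ‖∑ i, v i‖ ≤ ∑ i, ‖v i‖ := norm_sum_le _ _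
    have h2 : (∑ i, ‖v i‖) * ‖e‖ * Real.cos θ ≤ ∑ i, ⟪v i, e⟫ := by
      rw [Finset.sum_mul, Finset.sum_mul]
      exact Finset.sum_le_sum fun i _ => key i
    have h3 : ‖∑ i, v i‖ * ‖e‖ * Real.cos θ ≤ (∑ i, ‖v i‖) * ‖e‖ * Real.cos θ := by
      have : (0:ℝ) ≤ ‖e‖ * Real.cos θ := by positivity
      nlinarith
    calc ‖∑ i, v i‖ * ‖e‖ * Real.cos θ ≤ ∑ i, ⟪v i, e⟫ := h3.trans h2
      _ = ⟪∑ i, v i, e⟫ := (sum_inner _ _ _).symm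
  -- hence cos θ ≤ cos (angle (∑ v) e)
  have hcosle : Real.cos θ ≤ Real.cos (angle (∑ i, v i) e) := by
    rw [cos_angle]
    rw [le_div_iff₀ (mul_pos (norm_pos_iff.mpr hsum) (norm_pos_iff.mpr he))]
    linarith [hsumkey]
  by_contra h
  push_neg at h
  have := Real.strictAntiOn_cos ⟨hθ0, hθπ⟩ ⟨angle_nonneg _ _, angle_le_pi _ _⟩ h
  linarith
end

section
/- Let E be a finite-dimensional real inner product space of dimension at least 2, let e be a unit vector of E, let J be a nonzero vector of E with ⟨J, e⟩ > 0, and let α = angle(J, e). Let S ⊆ E be a set of unit vectors with the following property: for every nonzero q ∈ E with ⟨q, J⟩ = 0 there exist u, v ∈ S such that ⟨q, e + u⟩ = 0 and ⟨q, e − v⟩ = 0. Then the (Euclidean) diameter of S satisfies diam S ≥ 2 sin α. -/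
open scoped RealInnerProductSpace

open InnerProductGeometry

theorem diam_ge_two_sin_angle
    {E : Type*} [NormedAddCommGroup E] [InnerProductSpace ℝ E]
    [FiniteDimensional ℝ E] (hdim : 2 ≤ Module.finrank ℝ E)
    (e J : E) (he : ‖e‖ = 1) (hJ : J ≠ 0) (hJe : 0 < ⟪J, e⟫)
    (S : Set E) (hS : ∀ x ∈ S, ‖x‖ = 1)
    (hprop : ∀ q : E, q ≠ 0 → ⟪q, J⟫ = 0 →
      ∃ u ∈ S, ∃ v ∈ S, ⟪q, e + u⟫ = 0 ∧ ⟪q, e - v⟫ = 0) :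
    2 * Real.sin (angle J e) ≤ Metric.diam S := by
  set α := angle J e with hα
  have hsin_nonneg : 0 ≤ Real.sin α :=
    Real.sin_nonneg_of_nonneg_of_le_pi (angle_nonneg _ _) (angle_le_pi _ _)
  rcases eq_or_lt_of_le hsin_nonneg with h0 | hpos
  · calc 2 * Real.sin α = 0 := by rw [← h0]; ring
    _ ≤ Metric.diam S := Metric.diam_nonneg
  · have hJn : (0:ℝ) < ‖J‖ := norm_pos_iff.mpr hJ
    set c : ℝ := ⟪J, e⟫ / ‖J‖ ^ 2 with hc
    set q : E := e - c • J with hq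
    have hcos : Real.cos α = ⟪J, e⟫ / ‖J‖ := by
      rw [hα, cos_angle, he, mul_one]
    have hqJ : ⟪q, J⟫ = 0 := by
      have h1 : ⟪q, J⟫ = ⟪J, e⟫ - c * ‖J‖ ^ 2 := by
        simp [hq, inner_sub_left, real_inner_smul_left, real_inner_comm e J,
          real_inner_self_eq_norm_sq]
      rw [h1, hc]
      field_simp
      ring
    have hqe : ⟪q, e⟫ = Real.sin α ^ 2 := by
      have h1 : ⟪q, e⟫ = 1 - ⟪J, e⟫ ^ 2 / ‖J‖ ^ 2 := by
        have := real_inner_self_eq_norm_sq e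
        simp [hq, inner_sub_left, real_inner_smul_left, real_inner_comm J e,
          real_inner_self_eq_norm_sq, he, hc]
        ring
      have h2 : Real.sin α ^ 2 = 1 - Real.cos α ^ 2 := by
        have := Real.sin_sq_add_cos_sq α; linarith
      rw [h1, h2, hcos]
      field_simp
    have hqnorm : ‖q‖ = Real.sin α := by
      have h1 : ‖q‖ ^ 2 = Real.sin α ^ 2 := by
        rw [← real_inner_self_eq_norm_sq]
        have : ⟪q, q⟫ = ⟪q, e⟫ - c * ⟪q, J⟫ := by
          rw [hq, inner_sub_right, real_inner_smul_right]
        rw [this, hqJ, hqe]; ring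
      have := congrArg Real.sqrt h1
      rwa [Real.sqrt_sq (norm_nonneg q), Real.sqrt_sq hsin_nonneg] at this
    have hq0 : q ≠ 0 := by
      intro h
      rw [h, norm_zero] at hqnorm
      exact absurd hqnorm.symm (ne_of_gt hpos)
    obtain ⟨u, hu, v, hv, h1, h2⟩ := hprop q hq0 hqJ
    have hqu : ⟪q, u⟫ = -⟪q, e⟫ := by
      have := h1; rw [inner_add_right] at this; linarith
    have hqv : ⟪q, v⟫ = ⟪q, e⟫ := by
      have := h2; rw [inner_sub_right] at this; linarith
    have hkey : ⟪q, v - u⟫ = 2 * Real.sin α ^ 2 := by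
      rw [inner_sub_right, hqu, hqv, hqe]; ring
    have hcs : ⟪q, v - u⟫ ≤ ‖q‖ * ‖v - u‖ := real_inner_le_norm q (v - u)
    rw [hkey, hqnorm] at hcs
    have hvu : 2 * Real.sin α ≤ ‖v - u‖ := by
      have h3 : Real.sin α * (2 * Real.sin α) ≤ Real.sin α * ‖v - u‖ := by
        calc Real.sin α * (2 * Real.sin α) = 2 * Real.sin α ^ 2 := by ring
        _ ≤ Real.sin α * ‖v - u‖ := hcs
      exact le_of_mul_le_mul_left h3 hpos
    have hbdd : Bornology.IsBounded S := by
      apply (Metric.isBounded_closedBall (x := (0:E)) (r := 1)).subset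
      intro x hx
      rw [Metric.mem_closedBall, dist_zero_right, hS x hx]
    calc 2 * Real.sin α ≤ ‖v - u‖ := hvu
    _ = dist v u := (dist_eq_norm v u).symm
    _ ≤ Metric.diam S := Metric.dist_le_diam_of_mem hbdd hv hu
end
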